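/- Let d be an odd prime. There is no unit vector g ∈ ℂ^d with d < rank(G(g)) < 2d. -/

import Mathlib

set_option linter.unusedSectionVars false
set_option maxHeartbeats 1000000


open Complex Finset

noncomputable section

/-- `gw d` is the primitive `d`-th root of unity `ω = exp(2πi/d)`. -/
def gw (d : ℕ) : ℂ := Complex.exp (2 * Real.pi * Complex.I / d)

/-- `modT d k l g = M^k T^ℓ g`, where `(Mg)_n = ω^n g_n` and `(Tg)_n = g_{n-1}`. -/
def modT (d : ℕ) (k l : ZMod d) (g : ZMod d → ℂ) : ZMod d → ℂ :=
  fun n => gw d ^ (k.val * n.val) * g (n - l)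

/-- `inn d x y = ⟨x,y⟩ = Σ_n x_n conj(y_n)`. -/
def inn (d : ℕ) [NeZero d] (x y : ZMod d → ℂ) : ℂ :=
  ∑ n : ZMod d, x n * (starRingEnd ℂ) (y n)

/-- The `d² × d²` Gram matrix `G(g)` with entries `|⟨M^k T^ℓ g, M^{k'} T^{ℓ'} g⟩|²`. -/
def Gmat (d : ℕ) [NeZero d] (g : ZMod d → ℂ) :
    Matrix (ZMod d × ZMod d) (ZMod d × ZMod d) ℂ :=
  fun p q =>
    ((‖inn d (modT d p.1 p.2 g) (modT d q.1 q.2 g)‖ ^ 2 : ℝ) : ℂ)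


section Aux

def ee (d : ℕ) (a : ZMod d) : ℂ := gw d ^ a.val

variable {d : ℕ} [NeZero d]

lemma gw_pow_d : gw d ^ d = 1 := by
  have hd : (d:ℂ) ≠ 0 := Nat.cast_ne_zero.mpr (NeZero.ne d)
  rw [gw, ← Complex.exp_nat_mul]
  have : (d:ℂ) * (2 * Real.pi * Complex.I / d) = 2 * Real.pi * Complex.I := by
    field_simp
  rw [this, Complex.exp_two_pi_mul_I]

lemma gw_pow_mod (m : ℕ) : gw d ^ m = gw d ^ (m % d) := by
  conv_lhs => rw [← Nat.div_add_mod m d]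
  rw [pow_add, pow_mul, gw_pow_d, one_pow, one_mul]

lemma gw_pow_eq_one_iff {m : ℕ} : gw d ^ m = 1 ↔ d ∣ m := by
  have hd : (d:ℂ) ≠ 0 := Nat.cast_ne_zero.mpr (NeZero.ne d)
  have hpi : (2 * (Real.pi:ℂ) * Complex.I) ≠ 0 := by
    simp [Real.pi_ne_zero, Complex.I_ne_zero]
  rw [gw, ← Complex.exp_nat_mul, Complex.exp_eq_one_iff]
  constructor
  · rintro ⟨n, hn⟩
    have h2 : (m:ℂ) * (2 * Real.pi * Complex.I) = (n * d) * (2 * Real.pi * Complex.I) := by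
      field_simp at hn
      linear_combination (2 * Real.pi * Complex.I) * hn
    have h3 : (m:ℂ) = n * d := mul_right_cancel₀ hpi h2
    have h4 : (m:ℤ) = n * d := by exact_mod_cast h3
    have hdp : 0 < d := Nat.pos_of_ne_zero (NeZero.ne d)
    have hn0 : 0 ≤ n := by nlinarith [h4, Int.natCast_pos.mpr hdp]
    refine ⟨n.toNat, ?_⟩
    have h5 : (m:ℤ) = ((d * n.toNat : ℕ) : ℤ) := by
      push_cast
      rw [Int.toNat_of_nonneg hn0]
      linarith
    exact_mod_cast h5
  · rintro ⟨k, rfl⟩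
    refine ⟨k, ?_⟩
    push_cast
    field_simp

lemma ee_eq_pow (a : ZMod d) : ee d a = gw d ^ a.val := rfl

lemma ee_zero : ee d 0 = 1 := by
  simp [ee, ZMod.val_zero]

lemma ee_add (a b : ZMod d) : ee d (a + b) = ee d a * ee d b := by
  rw [ee, ee, ee, ZMod.val_add, ← gw_pow_mod, pow_add]

lemma gw_abs : ‖gw d‖ = 1 := by
  have : (2 * Real.pi * Complex.I / d) = ((2 * Real.pi / d : ℝ) : ℂ) * Complex.I := by
    push_cast; ring
  rw [gw, this, Complex.norm_exp_ofReal_mul_I]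

lemma ee_abs (a : ZMod d) : ‖ee d a‖ = 1 := by
  rw [ee, norm_pow, gw_abs, one_pow]

lemma ee_ne_zero (a : ZMod d) : ee d a ≠ 0 := by
  intro h
  have := ee_abs (d := d) a
  rw [h] at this
  simp at this

lemma ee_mul_ee_neg (a : ZMod d) : ee d a * ee d (-a) = 1 := by
  rw [← ee_add]; simp [ee_zero]

lemma conj_ee (a : ZMod d) : (starRingEnd ℂ) (ee d a) = ee d (-a) := by
  have h1 : ee d a * (starRingEnd ℂ) (ee d a) = 1 := by
    rw [Complex.mul_conj, ← Complex.sq_norm, ee_abs]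
    norm_num
  have h2 := ee_mul_ee_neg (d := d) a
  exact mul_left_cancel₀ (ee_ne_zero a) (h1.trans h2.symm)

lemma ee_ne_one {a : ZMod d} (ha : a ≠ 0) : ee d a ≠ 1 := by
  rw [ee]
  intro h
  have hdvd := gw_pow_eq_one_iff.mp h
  have hv : a.val < d := ZMod.val_lt a
  have hv0 : a.val ≠ 0 := fun h0 => ha ((ZMod.val_eq_zero a).mp h0)
  have := Nat.le_of_dvd (Nat.pos_of_ne_zero hv0) hdvd
  omega

lemma sum_ee (t : ZMod d) : ∑ n : ZMod d, ee d (t * n) = if t = 0 then (d : ℂ) else 0 := by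
  by_cases ht : t = 0
  · simp [ht, ee_zero, ZMod.card]
  · simp only [ht, if_false]
    have key : ∑ n : ZMod d, ee d (t * n) = ee d t * ∑ n : ZMod d, ee d (t * n) := by
      calc ∑ n : ZMod d, ee d (t * n) = ∑ n : ZMod d, ee d (t * (n + 1)) :=
            (Fintype.sum_equiv (Equiv.addRight (1 : ZMod d)) _ _ (fun n => by simp)).symm
        _ = ee d t * ∑ n : ZMod d, ee d (t * n) := by
            rw [Finset.mul_sum]
            refine Finset.sum_congr rfl (fun n _ => ?_)
            rw [mul_add, mul_one, ee_add]
            ring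
    have h2 : (ee d t - 1) * ∑ n : ZMod d, ee d (t * n) = 0 := by
      linear_combination -key
    rcases mul_eq_zero.mp h2 with h | h
    · exact absurd (by linear_combination h) (ee_ne_one ht)
    · exact h


open ComplexConjugate in
lemma amb_eq (g : ZMod d → ℂ) (ν : ZMod d × ZMod d) :
    inn d g (modT d ν.1 ν.2 g) = ∑ n : ZMod d, g n * ee d (-(ν.1 * n)) * conj (g (n - ν.2)) := by
  unfold inn modT
  refine Finset.sum_congr rfl (fun n _ => ?_)
  have h1 : gw d ^ (ν.1.val * n.val) = ee d (ν.1 * n) := by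
    rw [ee, ZMod.val_mul, ← gw_pow_mod]
  rw [h1, map_mul, conj_ee]
  ring

open ComplexConjugate Matrix

noncomputable def amb (g : ZMod d → ℂ) (ν : ZMod d × ZMod d) : ℂ :=
  inn d g (modT d ν.1 ν.2 g)

lemma amb_def (g : ZMod d → ℂ) (ν : ZMod d × ZMod d) :
    amb g ν = ∑ n : ZMod d, g n * ee d (-(ν.1 * n)) * conj (g (n - ν.2)) :=
  amb_eq g ν

lemma conj_amb_def (g : ZMod d → ℂ) (ν : ZMod d × ZMod d) :
    conj (amb g ν) = ∑ n : ZMod d, conj (g n) * ee d (ν.1 * n) * g (n - ν.2) := by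
  rw [amb_def, map_sum]
  refine Finset.sum_congr rfl fun n _ => ?_
  rw [_root_.map_mul, _root_.map_mul, conj_ee, neg_neg, Complex.conj_conj]

lemma key_identity (g : ZMod d → ℂ) (a b c₁ c₂ : ZMod d) :
    ∑ μ : ZMod d × ZMod d,
        amb g μ * conj (amb g (μ.1 - c₁, μ.2 - c₂)) * ee d (a * μ.1 + b * μ.2)
      = (d : ℂ) * ee d (a * c₁) * (amb g (c₁ - b, a) * conj (amb g (-b, a - c₂))) := by
  have step1 :
      ∑ μ : ZMod d × ZMod d,
          amb g μ * conj (amb g (μ.1 - c₁, μ.2 - c₂)) * ee d (a * μ.1 + b * μ.2)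
        = ∑ k : ZMod d, ∑ l : ZMod d, ∑ n : ZMod d, ∑ m : ZMod d,
            (g n * conj (g (n - l)) * conj (g m) * g (m - (l - c₂)) * ee d (b * l - c₁ * m))
              * ee d ((a - n + m) * k) := by
    rw [Fintype.sum_prod_type]
    refine Finset.sum_congr rfl fun k _ => Finset.sum_congr rfl fun l _ => ?_
    rw [amb_def, conj_amb_def, Finset.sum_mul_sum, Finset.sum_mul]
    refine Finset.sum_congr rfl fun n _ => ?_
    rw [Finset.sum_mul]
    refine Finset.sum_congr rfl fun m _ => ?_
    have hm : ee d (-(k * n)) * ee d ((k - c₁) * m) * ee d (a * k + b * l)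
        = ee d (b * l - c₁ * m) * ee d ((a - n + m) * k) := by
      rw [← ee_add, ← ee_add, ← ee_add]
      congr 1
      ring
    linear_combination (g n * conj (g (n - l)) * conj (g m) * g (m - (l - c₂))) * hm
  have step2 :
      ∑ k : ZMod d, ∑ l : ZMod d, ∑ n : ZMod d, ∑ m : ZMod d,
          (g n * conj (g (n - l)) * conj (g m) * g (m - (l - c₂)) * ee d (b * l - c₁ * m))
            * ee d ((a - n + m) * k)
        = ∑ l : ZMod d, ∑ m : ZMod d, ∑ n : ZMod d, ∑ k : ZMod d,
            (g n * conj (g (n - l)) * conj (g m) * g (m - (l - c₂)) * ee d (b * l - c₁ * m))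
              * ee d ((a - n + m) * k) := by
    rw [Finset.sum_comm]
    refine Finset.sum_congr rfl fun l _ => ?_
    calc ∑ k : ZMod d, ∑ n : ZMod d, ∑ m : ZMod d, _
        = ∑ n : ZMod d, ∑ k : ZMod d, ∑ m : ZMod d, _ := Finset.sum_comm
      _ = ∑ n : ZMod d, ∑ m : ZMod d, ∑ k : ZMod d, _ :=
          Finset.sum_congr rfl fun n _ => Finset.sum_comm
      _ = ∑ m : ZMod d, ∑ n : ZMod d, ∑ k : ZMod d, _ := Finset.sum_comm
  have step3 :
      ∑ l : ZMod d, ∑ m : ZMod d, ∑ n : ZMod d, ∑ k : ZMod d,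
          (g n * conj (g (n - l)) * conj (g m) * g (m - (l - c₂)) * ee d (b * l - c₁ * m))
            * ee d ((a - n + m) * k)
        = ∑ l : ZMod d, ∑ m : ZMod d,
            (g (a + m) * conj (g (a + m - l)) * conj (g m) * g (m - (l - c₂))
              * ee d (b * l - c₁ * m)) * (d : ℂ) := by
    refine Finset.sum_congr rfl fun l _ => Finset.sum_congr rfl fun m _ => ?_
    have hcollapse : ∀ n : ZMod d,
        (∑ k : ZMod d, (g n * conj (g (n - l)) * conj (g m) * g (m - (l - c₂))
            * ee d (b * l - c₁ * m)) * ee d ((a - n + m) * k))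
        = if n = a + m then
            (g n * conj (g (n - l)) * conj (g m) * g (m - (l - c₂))
              * ee d (b * l - c₁ * m)) * (d : ℂ) else 0 := by
      intro n
      rw [← Finset.mul_sum, sum_ee]
      by_cases hn : n = a + m
      · have : a - n + m = 0 := by rw [hn]; ring
        rw [if_pos this, if_pos hn]
      · have : ¬ (a - n + m = 0) := fun h => hn (by linear_combination -h)
        rw [if_neg this, if_neg hn, mul_zero]
    rw [Finset.sum_congr rfl (fun n _ => hcollapse n), Finset.sum_ite_eq' Finset.univ (a + m)]
    simp
  have F1 : ∀ t : ZMod d,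
      ∑ m : ZMod d, g (a + m) * conj (g m) * ee d (t * m)
        = ee d (-(t * a)) * amb g (-t, a) := by
    intro t
    have expand : amb g (-t, a)
        = ∑ m : ZMod d, g (m + a) * ee d (t * (m + a)) * conj (g m) := by
      rw [amb_def]
      refine (Fintype.sum_equiv (Equiv.addRight a)
        (fun m => g (m + a) * ee d (t * (m + a)) * conj (g m))
        (fun n => g n * ee d (-((-t, a).1 * n)) * conj (g (n - (-t, a).2)))
        (fun m => ?_)).symm
      simp only [Equiv.coe_addRight]
      rw [show (-(-t * (m + a)) : ZMod d) = t * (m + a) by ring,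
        show (m + a - a : ZMod d) = m by ring]
    rw [expand, Finset.mul_sum]
    refine Finset.sum_congr rfl fun m _ => ?_
    have hsplit : ee d (t * (m + a)) = ee d (t * m) * ee d (t * a) := by
      rw [← ee_add]; congr 1; ring
    have hphase := ee_mul_ee_neg (d := d) (t * a)
    rw [show a + m = m + a by ring]
    linear_combination (-(ee d (-(t * a)) * g (m + a) * conj (g m))) * hsplit
      - (g (m + a) * conj (g m) * ee d (t * m)) * hphase
  have F2 : ∑ j : ZMod d, conj (g (a + j)) * g (j + c₂) * ee d (-(b * j))
      = ee d (a * b) * conj (amb g (-b, a - c₂)) := by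
    have expand : conj (amb g (-b, a - c₂))
        = ∑ j : ZMod d, conj (g (j + a)) * ee d (-b * (j + a)) * g (j + c₂) := by
      rw [conj_amb_def]
      refine (Fintype.sum_equiv (Equiv.addRight a)
        (fun j => conj (g (j + a)) * ee d (-b * (j + a)) * g (j + c₂))
        (fun n => conj (g n) * ee d ((-b, a - c₂).1 * n) * g (n - (-b, a - c₂).2))
        (fun j => ?_)).symm
      simp only [Equiv.coe_addRight]
      rw [show (j + a - (a - c₂) : ZMod d) = j + c₂ by ring]
    rw [expand, Finset.mul_sum]
    refine Finset.sum_congr rfl fun j _ => ?_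
    have hsplit : ee d (-b * (j + a)) = ee d (-(b * j)) * ee d (-(b * a)) := by
      rw [← ee_add]; congr 1; ring
    have hphase : ee d (a * b) * ee d (-(b * a)) = 1 := by
      rw [show (-(b*a)) = -(a*b) by ring]; exact ee_mul_ee_neg (a * b)
    rw [show a + j = j + a by ring]
    linear_combination (-(ee d (a * b) * conj (g (j + a)) * g (j + c₂))) * hsplit
      - (conj (g (j + a)) * g (j + c₂) * ee d (-(b * j))) * hphase
  have step4 :
      ∑ l : ZMod d, ∑ m : ZMod d,
          (g (a + m) * conj (g (a + m - l)) * conj (g m) * g (m - (l - c₂))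
            * ee d (b * l - c₁ * m)) * (d : ℂ)
        = ((∑ m : ZMod d, g (a + m) * conj (g m) * ee d ((b - c₁) * m))
            * (∑ j : ZMod d, conj (g (a + j)) * g (j + c₂) * ee d (-(b * j)))) * (d : ℂ) := by
    rw [Finset.sum_comm]
    have reidx : ∀ m : ZMod d,
        (∑ l : ZMod d, (g (a + m) * conj (g (a + m - l)) * conj (g m) * g (m - (l - c₂))
            * ee d (b * l - c₁ * m)) * (d : ℂ))
        = ∑ j : ZMod d, ((g (a + m) * conj (g m) * ee d ((b - c₁) * m))
            * (conj (g (a + j)) * g (j + c₂) * ee d (-(b * j)))) * (d : ℂ) := by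
      intro m
      refine Fintype.sum_equiv (Equiv.subLeft m) _ _ (fun j => ?_)
      simp only [Equiv.subLeft_apply]
      rw [show (a + (m - j) : ZMod d) = a + m - j by ring,
        show (m - j + c₂ : ZMod d) = m - (j - c₂) by ring]
      have hsplit : ee d (b * j - c₁ * m) = ee d ((b - c₁) * m) * ee d (-(b * (m - j))) := by
        rw [← ee_add]; congr 1; ring
      linear_combination
        (g (a + m) * conj (g (a + m - j)) * conj (g m) * g (m - (j - c₂)) * (d : ℂ)) * hsplit
    rw [Finset.sum_congr rfl (fun m _ => reidx m)]
    rw [Finset.sum_mul_sum]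
    simp only [Finset.sum_mul]
  rw [step1, step2, step3, step4, F1 (b - c₁), F2]
  rw [show -(b - c₁) = c₁ - b by ring]
  have hphase : ee d (-((b - c₁) * a)) * ee d (a * b) = ee d (a * c₁) := by
    rw [← ee_add]; congr 1; ring
  linear_combination
    ((d : ℂ) * amb g (c₁ - b, a) * conj (amb g (-b, a - c₂))) * hphase

lemma sum_ee_pair (x : ZMod d × ZMod d) :
    ∑ μ : ZMod d × ZMod d, ee d (μ.1 * x.1 + μ.2 * x.2)
      = if x = 0 then ((d : ℂ) ^ 2) else 0 := by
  rw [Fintype.sum_prod_type]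
  have : ∀ μ₁ : ZMod d, ∑ μ₂ : ZMod d, ee d (μ₁ * x.1 + μ₂ * x.2)
      = ee d (μ₁ * x.1) * ∑ μ₂ : ZMod d, ee d (x.2 * μ₂) := by
    intro μ₁
    rw [Finset.mul_sum]
    exact Finset.sum_congr rfl fun μ₂ _ => by
      rw [← ee_add]; congr 1; ring
  rw [Finset.sum_congr rfl fun μ₁ _ => this μ₁, ← Finset.sum_mul, sum_ee]
  have h1 : ∑ μ₁ : ZMod d, ee d (μ₁ * x.1) = ∑ μ₁ : ZMod d, ee d (x.1 * μ₁) :=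
    Finset.sum_congr rfl fun μ₁ _ => by rw [mul_comm]
  rw [h1, sum_ee]
  rcases eq_or_ne x 0 with hx | hx
  · rw [hx]
    simp [Prod.fst_zero, Prod.snd_zero]
    ring
  · rw [if_neg hx]
    rcases (not_and_or.mp (fun h : x.1 = 0 ∧ x.2 = 0 => hx (Prod.ext h.1 h.2))) with h | h
    · rw [if_neg h, zero_mul]
    · rw [if_neg h, mul_zero]

lemma fourier_inv (h : ZMod d × ZMod d → ℂ) (ν : ZMod d × ZMod d) :
    ∑ μ : ZMod d × ZMod d,
        (∑ ρ : ZMod d × ZMod d, h ρ * ee d (μ.1 * ρ.1 + μ.2 * ρ.2))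
          * ee d (-(μ.1 * ν.1 + μ.2 * ν.2))
      = (d : ℂ) ^ 2 * h ν := by
  simp only [Finset.sum_mul]
  rw [Finset.sum_comm]
  have key : ∀ ρ : ZMod d × ZMod d,
      ∑ μ : ZMod d × ZMod d, h ρ * ee d (μ.1 * ρ.1 + μ.2 * ρ.2) * ee d (-(μ.1 * ν.1 + μ.2 * ν.2))
        = h ρ * (if ρ - ν = 0 then ((d:ℂ)^2) else 0) := by
    intro ρ
    rw [← sum_ee_pair (ρ - ν), Finset.mul_sum]
    refine Finset.sum_congr rfl fun μ _ => ?_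
    have hm : ee d (μ.1 * ρ.1 + μ.2 * ρ.2) * ee d (-(μ.1 * ν.1 + μ.2 * ν.2))
        = ee d (μ.1 * (ρ - ν).1 + μ.2 * (ρ - ν).2) := by
      rw [← ee_add]; congr 1
      simp only [Prod.fst_sub, Prod.snd_sub]
      ring
    linear_combination h ρ * hm
  rw [Finset.sum_congr rfl fun ρ _ => key ρ]
  have : ∀ ρ : ZMod d × ZMod d, (h ρ * (if ρ - ν = 0 then ((d:ℂ)^2) else 0))
      = if ρ = ν then h ρ * (d:ℂ)^2 else 0 := by
    intro ρ
    rcases eq_or_ne ρ ν with hρ | hρ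
    · rw [if_pos hρ, if_pos (by rw [hρ, sub_self])]
    · rw [if_neg hρ, if_neg (fun hh => hρ (by linear_combination (norm := module) hh)), mul_zero]
  rw [Finset.sum_congr rfl fun ρ _ => this ρ, Finset.sum_ite_eq' Finset.univ ν]
  simp [mul_comm]

lemma amb_neg (g : ZMod d → ℂ) (ν : ZMod d × ZMod d) :
    amb g (-ν) = ee d (-(ν.1 * ν.2)) * conj (amb g ν) := by
  rw [conj_amb_def, amb_def, Finset.mul_sum]
  refine (Fintype.sum_equiv (Equiv.addRight ν.2) _ _ (fun n => ?_))
  simp only [Equiv.coe_addRight, Prod.fst_neg, Prod.snd_neg]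
  rw [show (n - -ν.2 : ZMod d) = n + ν.2 by ring,
    show (n + ν.2 - ν.2 : ZMod d) = n by ring,
    show (-(-ν.1 * n) : ZMod d) = ν.1 * n by ring]
  have hsplit : ee d (ν.1 * (n + ν.2)) = ee d (ν.1 * n) * ee d (ν.1 * ν.2) := by
    rw [← ee_add]; congr 1; ring
  have hphase := ee_mul_ee_neg (d := d) (ν.1 * ν.2)
  linear_combination (-(ee d (-(ν.1 * ν.2)) * conj (g (n + ν.2)) * g n)) * hsplit
    - (g n * conj (g (n + ν.2)) * ee d (ν.1 * n)) * hphase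

lemma normSq_amb_neg (g : ZMod d → ℂ) (ν : ZMod d × ZMod d) :
    Complex.normSq (amb g (-ν)) = Complex.normSq (amb g ν) := by
  rw [amb_neg, Complex.normSq_mul, Complex.normSq_conj]
  have : Complex.normSq (ee d (-(ν.1 * ν.2))) = 1 := by
    rw [Complex.normSq_eq_norm_sq, ee_abs]; norm_num
  rw [this, one_mul]

lemma janssen (g : ZMod d → ℂ) (a b : ZMod d) :
    ∑ μ : ZMod d × ZMod d, (Complex.normSq (amb g μ) : ℂ) * ee d (a * μ.1 + b * μ.2)
      = (d : ℂ) * (Complex.normSq (amb g (-b, a)) : ℂ) := by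
  have h := key_identity g a b 0 0
  simp only [sub_zero, mul_zero, ee_zero, mul_one, zero_sub] at h
  calc ∑ μ : ZMod d × ZMod d, (Complex.normSq (amb g μ) : ℂ) * ee d (a * μ.1 + b * μ.2)
      = ∑ μ : ZMod d × ZMod d, amb g μ * conj (amb g (μ.1, μ.2)) * ee d (a * μ.1 + b * μ.2) := by
        refine Finset.sum_congr rfl fun μ _ => ?_
        rw [Prod.mk.eta, Complex.mul_conj]
    _ = (d:ℂ) * (amb g (-b, a) * conj (amb g (-b, a))) := h
    _ = (d : ℂ) * (Complex.normSq (amb g (-b, a)) : ℂ) := by rw [Complex.mul_conj]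

lemma inn_modT (g : ZMod d → ℂ) (k l k' l' : ZMod d) :
    inn d (modT d k l g) (modT d k' l' g)
      = ee d ((k - k') * l) * amb g (k' - k, l' - l) := by
  unfold inn
  rw [amb_def, Finset.mul_sum]
  refine Fintype.sum_equiv (Equiv.subRight l) _ _ (fun n => ?_)
  simp only [Equiv.subRight_apply]
  unfold modT
  have h1 : gw d ^ (k.val * n.val) = ee d (k * n) := by
    rw [ee, ZMod.val_mul, ← gw_pow_mod]
  have h2 : gw d ^ (k'.val * n.val) = ee d (k' * n) := by
    rw [ee, ZMod.val_mul, ← gw_pow_mod]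
  rw [h1, h2, _root_.map_mul, conj_ee]
  rw [show (n - l - (l' - l) : ZMod d) = n - l' by ring]
  have hsplit : ee d (k * n) * ee d (-(k' * n))
      = ee d ((k - k') * l) * ee d (-((k' - k) * (n - l))) := by
    rw [← ee_add, ← ee_add]; congr 1; ring
  linear_combination (g (n - l) * conj (g (n - l'))) * hsplit

lemma gmat_entry (g : ZMod d → ℂ) (ρ τ : ZMod d × ZMod d) :
    Gmat d g ρ τ = (Complex.normSq (amb g (τ - ρ)) : ℂ) := by
  unfold Gmat
  rw [inn_modT g ρ.1 ρ.2 τ.1 τ.2]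
  rw [norm_mul, ee_abs, one_mul, Complex.sq_norm]
  rw [show ((τ.1 - ρ.1, τ.2 - ρ.2) : ZMod d × ZMod d) = τ - ρ from rfl]

noncomputable def Vm (d : ℕ) [NeZero d] : Matrix (ZMod d × ZMod d) (ZMod d × ZMod d) ℂ :=
  fun μ ν => ee d (μ.1 * ν.1 + μ.2 * ν.2)

lemma Vm_mul_conjTranspose :
    Vm d * (Vm d)ᴴ = ((d : ℂ) ^ 2) • (1 : Matrix (ZMod d × ZMod d) (ZMod d × ZMod d) ℂ) := by
  ext ρ τ
  rw [Matrix.mul_apply]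
  have : ∀ ν : ZMod d × ZMod d, Vm d ρ ν * (Vm d)ᴴ ν τ
      = ee d (ν.1 * (ρ - τ).1 + ν.2 * (ρ - τ).2) := by
    intro ν
    rw [Matrix.conjTranspose_apply]
    unfold Vm
    rw [Complex.star_def, conj_ee, ← ee_add]
    congr 1
    simp only [Prod.fst_sub, Prod.snd_sub]
    ring
  rw [Finset.sum_congr rfl fun ν _ => this ν, sum_ee_pair]
  rcases eq_or_ne ρ τ with hρ | hρ
  · rw [if_pos (by rw [hρ, sub_self]), hρ]
    simp [Matrix.one_apply]
  · rw [if_neg (fun hh => hρ (by linear_combination (norm := module) hh))]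
    simp [Matrix.smul_apply, Matrix.one_apply, hρ]

lemma Vm_det_isUnit : IsUnit (Vm d).det ∧ IsUnit ((Vm d)ᴴ).det := by
  have hd : ((d : ℂ) ^ 2) ≠ 0 :=
    pow_ne_zero 2 (Nat.cast_ne_zero.mpr (NeZero.ne d))
  have h1 : Vm d * (((d:ℂ)^2)⁻¹ • (Vm d)ᴴ) = 1 := by
    rw [Matrix.mul_smul, Vm_mul_conjTranspose, smul_smul, inv_mul_cancel₀ hd, one_smul]
  have h2 : (((d:ℂ)^2)⁻¹ • (Vm d)ᴴ) * Vm d = 1 := mul_eq_one_comm.mp h1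
  constructor
  · exact Matrix.isUnit_det_of_right_inverse h1
  · have h3 : (Vm d)ᴴ * (((d:ℂ)^2)⁻¹ • Vm d) = 1 := by
      rw [Matrix.mul_smul, ← Matrix.smul_mul]
      exact h2
    exact Matrix.isUnit_det_of_right_inverse h3

lemma gmat_factor (g : ZMod d → ℂ) :
    Gmat d g = (Vm d)ᴴ *
      (Matrix.diagonal (fun μ : ZMod d × ZMod d =>
          ((d : ℂ))⁻¹ * (Complex.normSq (amb g (-μ.2, μ.1)) : ℂ)) * Vm d) := by
  ext ρ τ
  rw [Matrix.mul_apply, gmat_entry]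
  have hterm : ∀ μ : ZMod d × ZMod d,
      (Vm d)ᴴ ρ μ * (Matrix.diagonal (fun μ : ZMod d × ZMod d =>
          ((d : ℂ))⁻¹ * (Complex.normSq (amb g (-μ.2, μ.1)) : ℂ)) * Vm d) μ τ
        = ((d : ℂ))⁻¹ * ((Complex.normSq (amb g (-μ.2, μ.1)) : ℂ)
            * ee d (μ.1 * (τ - ρ).1 + μ.2 * (τ - ρ).2)) := by
    intro μ
    rw [Matrix.conjTranspose_apply, Matrix.diagonal_mul]
    unfold Vm
    rw [Complex.star_def, conj_ee]
    have : ee d (-(μ.1 * ρ.1 + μ.2 * ρ.2)) * ee d (μ.1 * τ.1 + μ.2 * τ.2)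
        = ee d (μ.1 * (τ - ρ).1 + μ.2 * (τ - ρ).2) := by
      rw [← ee_add]; congr 1
      simp only [Prod.fst_sub, Prod.snd_sub]
      ring
    linear_combination (((d:ℂ))⁻¹ * (Complex.normSq (amb g (-μ.2, μ.1)) : ℂ)) * this
  rw [Finset.sum_congr rfl fun μ _ => hterm μ, ← Finset.mul_sum]
  have reidx : ∑ μ : ZMod d × ZMod d, (Complex.normSq (amb g (-μ.2, μ.1)) : ℂ)
        * ee d (μ.1 * (τ - ρ).1 + μ.2 * (τ - ρ).2)
      = ∑ ν : ZMod d × ZMod d, (Complex.normSq (amb g ν) : ℂ)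
        * ee d (-(τ - ρ).2 * ν.1 + (τ - ρ).1 * ν.2) := by
    refine Fintype.sum_equiv ⟨fun μ : ZMod d × ZMod d => ((-μ.2, μ.1) : ZMod d × ZMod d),
      fun ν => (ν.2, -ν.1), fun μ => by simp, fun ν => by simp⟩ _ _ (fun μ => ?_)
    simp only [Equiv.coe_fn_mk]
    congr 1
    congr 1
    ring
  rw [reidx, janssen g (-(τ - ρ).2) ((τ - ρ).1)]
  have : (amb g (-(τ - ρ).1, -(τ - ρ).2)) = amb g (-(τ - ρ)) := by
    congr 1
  rw [this, normSq_amb_neg]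
  have hd : (d : ℂ) ≠ 0 := Nat.cast_ne_zero.mpr (NeZero.ne d)
  field_simp

lemma rank_eq_card (g : ZMod d → ℂ) :
    (Gmat d g).rank
      = (Finset.univ.filter (fun ν : ZMod d × ZMod d => amb g ν ≠ 0)).card := by
  classical
  obtain ⟨hV, hVH⟩ := Vm_det_isUnit (d := d)
  rw [gmat_factor g, Matrix.rank_mul_eq_right_of_isUnit_det _ _ hVH,
    Matrix.rank_mul_eq_left_of_isUnit_det _ _ hV, Matrix.rank_diagonal]
  have hd : (d : ℂ) ≠ 0 := Nat.cast_ne_zero.mpr (NeZero.ne d)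
  have hiff : ∀ μ : ZMod d × ZMod d,
      (((d : ℂ))⁻¹ * (Complex.normSq (amb g (-μ.2, μ.1)) : ℂ) ≠ 0)
        ↔ amb g (-μ.2, μ.1) ≠ 0 := by
    intro μ
    constructor
    · intro h h0
      exact h (by rw [h0]; simp)
    · intro h h0
      rcases mul_eq_zero.mp h0 with h1 | h1
      · exact (inv_ne_zero hd) h1
      · exact h (by
          have : Complex.normSq (amb g (-μ.2, μ.1)) = 0 := by exact_mod_cast h1
          exact Complex.normSq_eq_zero.mp this)
  have e1 : Fintype.card {μ : ZMod d × ZMod d //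
        ((d : ℂ))⁻¹ * (Complex.normSq (amb g (-μ.2, μ.1)) : ℂ) ≠ 0}
      = Fintype.card {μ : ZMod d × ZMod d // amb g (-μ.2, μ.1) ≠ 0} :=
    Fintype.card_congr (Equiv.subtypeEquivRight hiff)
  have e2 : Fintype.card {μ : ZMod d × ZMod d // amb g (-μ.2, μ.1) ≠ 0}
      = Fintype.card {ν : ZMod d × ZMod d // amb g ν ≠ 0} := by
    refine Fintype.card_congr (Equiv.subtypeEquiv
      (⟨fun μ : ZMod d × ZMod d => ((-μ.2, μ.1) : ZMod d × ZMod d),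
        fun ν => (ν.2, -ν.1), fun μ => by simp, fun ν => by simp⟩) (fun μ => ?_))
    simp only [Equiv.coe_fn_mk]
  rw [e1, e2, Fintype.card_subtype]

lemma uncertainty (g : ZMod d → ℂ) (c : ZMod d × ZMod d)
    (hne : (Finset.univ.filter
      (fun x : ZMod d × ZMod d => amb g x ≠ 0 ∧ amb g (x - c) ≠ 0)).Nonempty) :
    d ≤ (Finset.univ.filter
      (fun x : ZMod d × ZMod d => amb g x ≠ 0 ∧ amb g (x - c) ≠ 0)).card := by
  classical
  set T := Finset.univ.filter
    (fun x : ZMod d × ZMod d => amb g x ≠ 0 ∧ amb g (x - c) ≠ 0) with hT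
  set h : ZMod d × ZMod d → ℂ := fun ν => amb g ν * conj (amb g (ν - c)) with hh
  -- the transform of h
  have hKI : ∀ μ : ZMod d × ZMod d,
      (∑ ρ : ZMod d × ZMod d, h ρ * ee d (μ.1 * ρ.1 + μ.2 * ρ.2))
        = (d : ℂ) * ee d (μ.1 * c.1) * h (c.1 - μ.2, μ.1) := by
    intro μ
    have := key_identity g μ.1 μ.2 c.1 c.2
    calc ∑ ρ : ZMod d × ZMod d, h ρ * ee d (μ.1 * ρ.1 + μ.2 * ρ.2)
        = ∑ ρ : ZMod d × ZMod d,
            amb g ρ * conj (amb g (ρ.1 - c.1, ρ.2 - c.2)) * ee d (μ.1 * ρ.1 + μ.2 * ρ.2) := by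
          refine Finset.sum_congr rfl fun ρ _ => ?_
          rw [hh]
          rw [show ((ρ.1 - c.1, ρ.2 - c.2) : ZMod d × ZMod d) = ρ - c from rfl]
      _ = (d : ℂ) * ee d (μ.1 * c.1)
            * (amb g (c.1 - μ.2, μ.1) * conj (amb g (-μ.2, μ.1 - c.2))) := this
      _ = (d : ℂ) * ee d (μ.1 * c.1) * h (c.1 - μ.2, μ.1) := by
          simp only [hh]
          have hpair : ((c.1 - μ.2, μ.1) : ZMod d × ZMod d) - c
              = (c.1 - μ.2 - c.1, μ.1 - c.2) := rfl
          rw [hpair, show (c.1 - μ.2 - c.1 : ZMod d) = -μ.2 by ring]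
  -- absolute value of the transform
  have habs : ∀ μ : ZMod d × ZMod d,
      ‖∑ ρ : ZMod d × ZMod d, h ρ * ee d (μ.1 * ρ.1 + μ.2 * ρ.2)‖
        = d * ‖h (c.1 - μ.2, μ.1)‖ := by
    intro μ
    rw [hKI μ, norm_mul, norm_mul, ee_abs, mul_one, Complex.norm_natCast]
  -- pick the max of |h| on T
  obtain ⟨ν₀, hν₀T, hmax⟩ := T.exists_max_image (fun ν => ‖h ν‖) hne
  have hM : 0 < ‖h ν₀‖ := by
    rw [hT] at hν₀T
    simp only [Finset.mem_filter] at hν₀T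
    have : h ν₀ ≠ 0 := mul_ne_zero hν₀T.2.1 (by
      simpa using hν₀T.2.2)
    simpa [norm_pos_iff] using this
  set M := ‖h ν₀‖ with hMdef
  -- inversion bound
  have hinv := fourier_inv h ν₀
  have hb1 : (d : ℝ)^2 * M ≤ ∑ μ : ZMod d × ZMod d,
      ‖∑ ρ : ZMod d × ZMod d, h ρ * ee d (μ.1 * ρ.1 + μ.2 * ρ.2)‖ := by
    have : (d : ℝ)^2 * M = ‖(d:ℂ)^2 * h ν₀‖ := by
      rw [norm_mul, norm_pow, Complex.norm_natCast]
    rw [this, ← hinv]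
    refine le_trans (norm_sum_le _ _) ?_
    refine le_of_eq (Finset.sum_congr rfl fun μ _ => ?_)
    rw [norm_mul, ee_abs, mul_one]
  have hb2 : ∑ μ : ZMod d × ZMod d,
      ‖∑ ρ : ZMod d × ZMod d, h ρ * ee d (μ.1 * ρ.1 + μ.2 * ρ.2)‖
        = d * ∑ ν : ZMod d × ZMod d, ‖h ν‖ := by
    rw [Finset.sum_congr rfl fun μ _ => habs μ, ← Finset.mul_sum]
    congr 1
    refine Fintype.sum_equiv
      (⟨fun μ : ZMod d × ZMod d => ((c.1 - μ.2, μ.1) : ZMod d × ZMod d),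
        fun ν => (ν.2, c.1 - ν.1), fun μ => by simp, fun ν => by simp⟩) _ _ (fun μ => rfl)
  have hb3 : ∑ ν : ZMod d × ZMod d, ‖h ν‖ ≤ T.card * M := by
    have hzero : ∀ ν ∈ Finset.univ \ T, ‖h ν‖ = 0 := by
      intro ν hν
      rw [Finset.mem_sdiff, hT] at hν
      simp only [Finset.mem_filter, Finset.mem_univ, true_and, not_and_or, not_not] at hν
      rcases hν with h0 | h0 <;> simp [hh, h0]
    have : ∑ ν : ZMod d × ZMod d, ‖h ν‖ = ∑ ν ∈ T, ‖h ν‖ := by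
      rw [← Finset.sum_subset (Finset.subset_univ T)]
      intro x _ hx
      exact hzero x (Finset.mem_sdiff.mpr ⟨Finset.mem_univ x, hx⟩)
    rw [this]
    calc ∑ ν ∈ T, ‖h ν‖ ≤ T.card • M :=
          Finset.sum_le_card_nsmul T _ M (fun x hx => hmax x hx)
      _ = T.card * M := by rw [nsmul_eq_mul]
  have hfin : (d : ℝ)^2 * M ≤ d * (T.card * M) := by
    calc (d : ℝ)^2 * M ≤ _ := hb1
      _ = d * ∑ ν : ZMod d × ZMod d, ‖h ν‖ := hb2
      _ ≤ d * (T.card * M) := by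
          have hd0 : (0:ℝ) ≤ d := Nat.cast_nonneg d
          exact mul_le_mul_of_nonneg_left hb3 hd0
  have hd0 : (0:ℝ) < d := by
    have := Nat.pos_of_ne_zero (NeZero.ne d)
    exact_mod_cast this
  have : (d : ℝ) ≤ T.card := by
    have h2 : (d:ℝ) * ((d:ℝ) * M) ≤ (d:ℝ) * (T.card * M) := by
      calc (d:ℝ) * ((d:ℝ) * M) = (d:ℝ)^2 * M := by ring
        _ ≤ d * (T.card * M) := hfin
    have h3 : (d:ℝ) * M ≤ T.card * M := le_of_mul_le_mul_left h2 hd0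
    exact le_of_mul_le_mul_right h3 hM
  exact_mod_cast this

end Aux

/-- for an odd prime `d`, no unit vector `g ∈ ℂ^d` has
`d < rank G(g) < 2d`. -/
theorem stmt19 (d : ℕ) [NeZero d] (hp : d.Prime) (hodd : Odd d) :
    ¬ ∃ g : ZMod d → ℂ,
      (∑ n : ZMod d, ‖g n‖ ^ 2 = 1) ∧
      d < (Gmat d g).rank ∧ (Gmat d g).rank < 2 * d := by
  classical
  rintro ⟨g, hg, h1, h2⟩
  -- the ambiguity function at 0 is 1
  have hamb0 : amb g (0 : ZMod d × ZMod d) = 1 := by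
    rw [amb_def]
    have hterm0 : ∀ n : ZMod d, g n * ee d (-((0 : ZMod d × ZMod d).1 * n))
        * (starRingEnd ℂ) (g (n - (0 : ZMod d × ZMod d).2)) = (Complex.normSq (g n) : ℂ) := by
      intro n
      simp only [Prod.fst_zero, Prod.snd_zero, zero_mul, neg_zero, ee_zero, sub_zero,
        mul_one, Complex.mul_conj]
    rw [Finset.sum_congr rfl fun n _ => hterm0 n]
    have hcast : (∑ n : ZMod d, (Complex.normSq (g n) : ℂ))
        = ((∑ n : ZMod d, Complex.normSq (g n) : ℝ) : ℂ) := by norm_cast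
    rw [hcast]
    have hsum : ∑ n : ZMod d, Complex.normSq (g n) = 1 := by
      rw [← hg]
      exact Finset.sum_congr rfl fun n _ => (Complex.sq_norm _).symm
    rw [hsum]
    norm_num
  have hambne : amb g (0 : ZMod d × ZMod d) ≠ 0 := by rw [hamb0]; exact one_ne_zero
  -- the support and its size
  set S : Finset (ZMod d × ZMod d) :=
    Finset.univ.filter (fun ν : ZMod d × ZMod d => amb g ν ≠ 0) with hS
  set N : ℕ := S.card with hN
  have hrank : (Gmat d g).rank = N := rank_eq_card g
  rw [hrank] at h1 h2
  -- overlap sets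
  set sc : (ZMod d × ZMod d) → Finset (ZMod d × ZMod d) := fun c =>
    Finset.univ.filter
      (fun x : ZMod d × ZMod d => amb g x ≠ 0 ∧ amb g (x - c) ≠ 0) with hsc
  have hsc0 : sc 0 = S := by
    rw [hsc, hS]
    refine Finset.filter_congr fun x _ => ?_
    rw [sub_zero]
    exact and_iff_left_iff_imp.mpr (fun h => h)
  have hscsub : ∀ c, sc c ⊆ S := by
    intro c x hx
    rw [hsc] at hx
    rw [hS, Finset.mem_filter]
    exact ⟨Finset.mem_univ x, (Finset.mem_filter.mp hx).2.1⟩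
  have hkey : ∀ c, (sc c).Nonempty → d ≤ (sc c).card := fun c => uncertainty g c
  -- closure under subtraction
  have hclose : ∀ c c', (sc c).Nonempty → (sc c').Nonempty → (sc (c - c')).Nonempty := by
    intro c c' hc hc'
    have hdc := hkey c hc
    have hdc' := hkey c' hc'
    have hunion : (sc c ∪ sc c').card ≤ N := by
      rw [hN]
      exact Finset.card_le_card (Finset.union_subset (hscsub c) (hscsub c'))
    have hint : 0 < (sc c ∩ sc c').card := by
      have := Finset.card_union_add_card_inter (sc c) (sc c')
      omega
    obtain ⟨x, hx⟩ := Finset.card_pos.mp hint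
    rw [Finset.mem_inter, hsc] at hx
    obtain ⟨hx1, hx2⟩ := hx
    rw [Finset.mem_filter] at hx1 hx2
    refine ⟨x - c', ?_⟩
    rw [hsc, Finset.mem_filter]
    refine ⟨Finset.mem_univ _, hx2.2.2, ?_⟩
    rw [show x - c' - (c - c') = x - c from by abel]
    exact hx1.2.2
  -- the difference set is an additive subgroup
  set P : (ZMod d × ZMod d) → Prop := fun c => (sc c).Nonempty with hP
  have hP0 : P 0 := by
    refine ⟨0, ?_⟩
    rw [hsc, Finset.mem_filter]
    exact ⟨Finset.mem_univ _, hambne, by rw [sub_zero]; exact hambne⟩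
  set D : AddSubgroup (ZMod d × ZMod d) :=
    { carrier := {c | P c}
      zero_mem' := hP0
      add_mem' := by
        intro a b ha hb
        have hnb : P (0 - b) := hclose 0 b hP0 hb
        have : P (a - (0 - b)) := hclose a (0 - b) ha hnb
        simpa [sub_sub_cancel, zero_sub, sub_neg_eq_add] using this
      neg_mem' := by
        intro a ha
        have : P (0 - a) := hclose 0 a hP0 ha
        simpa [zero_sub] using this } with hD
  -- card of D
  have hcardD : Nat.card D = (Finset.univ.filter P).card := by
    rw [Nat.card_eq_fintype_card]
    rw [← Fintype.card_subtype]
    exact Fintype.card_congr (Equiv.subtypeEquivRight (fun c => Iff.rfl))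
  have hSsubD : S ⊆ Finset.univ.filter P := by
    intro ν hν
    rw [hS, Finset.mem_filter] at hν
    rw [Finset.mem_filter]
    refine ⟨Finset.mem_univ _, ν, ?_⟩
    rw [hsc, Finset.mem_filter]
    exact ⟨Finset.mem_univ _, hν.2, by rw [sub_self]; exact hambne⟩
  have hDbig : d < Nat.card D := by
    rw [hcardD]
    exact lt_of_lt_of_le h1 (hN ▸ Finset.card_le_card hSsubD)
  -- Lagrange : card D divides d^2
  have hcardG : Nat.card (ZMod d × ZMod d) = d ^ 2 := by
    rw [Nat.card_eq_fintype_card, Fintype.card_prod, ZMod.card]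
    ring
  have hdvd : Nat.card D ∣ d ^ 2 := by
    rw [← hcardG]
    exact AddSubgroup.card_addSubgroup_dvd_card D
  obtain ⟨k, hk2, hkeq⟩ := (Nat.dvd_prime_pow hp).mp hdvd
  have hDall : Nat.card D = d ^ 2 := by
    have h2le := hp.two_le
    interval_cases k
    · rw [hkeq, pow_zero] at hDbig; omega
    · rw [hkeq, pow_one] at hDbig; omega
    · exact hkeq
  -- hence every c has nonempty overlap
  have hPall : ∀ c, P c := by
    have : (Finset.univ.filter P).card = Fintype.card (ZMod d × ZMod d) := by
      rw [← hcardD, hDall, ← hcardG, Nat.card_eq_fintype_card]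
    have huniv : Finset.univ.filter P = Finset.univ :=
      Finset.eq_univ_of_card _ this
    intro c
    have : c ∈ Finset.univ.filter P := by rw [huniv]; exact Finset.mem_univ c
    exact (Finset.mem_filter.mp this).2
  -- double counting: total overlap is N^2
  have hsum : ∑ c : ZMod d × ZMod d, (sc c).card = N * N := by
    have hc1 : ∀ c, (sc c).card
        = ∑ x : ZMod d × ZMod d, if amb g x ≠ 0 ∧ amb g (x - c) ≠ 0 then 1 else 0 := by
      intro c
      rw [hsc, Finset.card_filter]
    rw [Finset.sum_congr rfl fun c _ => hc1 c, Finset.sum_comm]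
    have hc2 : ∀ x : ZMod d × ZMod d,
        (∑ c : ZMod d × ZMod d, if amb g x ≠ 0 ∧ amb g (x - c) ≠ 0 then 1 else 0)
          = if amb g x ≠ 0 then N else 0 := by
      intro x
      by_cases hx : amb g x ≠ 0
      · rw [if_pos hx]
        have : ∀ c : ZMod d × ZMod d,
            (if amb g x ≠ 0 ∧ amb g (x - c) ≠ 0 then 1 else 0)
              = if amb g (x - c) ≠ 0 then 1 else 0 := by
          intro c
          by_cases hc : amb g (x - c) ≠ 0
          · rw [if_pos ⟨hx, hc⟩, if_pos hc]
          · rw [if_neg (fun h => hc h.2), if_neg hc]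
        rw [Finset.sum_congr rfl fun c _ => this c]
        rw [← Finset.card_filter]
        rw [hN, hS]
        refine Finset.card_nbij (fun c => x - c) ?_ ?_ ?_
        · intro c hc
          simp only [Finset.coe_filter, Set.mem_setOf_eq] at hc ⊢
          exact ⟨Finset.mem_univ _, hc.2⟩
        · intro c₁ hc₁ c₂ hc₂ hcc
          exact sub_right_inj.mp hcc
        · intro ν hν
          simp only [Finset.coe_filter, Set.mem_setOf_eq] at hν ⊢
          refine ⟨x - ν, ⟨Finset.mem_univ _, ?_⟩, sub_sub_cancel x ν⟩
          rw [sub_sub_cancel]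
          exact hν.2
      · rw [if_neg hx]
        refine Finset.sum_eq_zero fun c _ => ?_
        rw [if_neg (fun h => hx h.1)]
    rw [Finset.sum_congr rfl fun x _ => hc2 x]
    rw [← Finset.sum_filter, Finset.sum_const, ← hS, ← hN, smul_eq_mul]
  -- lower bound on the total overlap
  have hlow : N + ((Finset.univ \ {(0 : ZMod d × ZMod d)}).card) * d
      ≤ ∑ c : ZMod d × ZMod d, (sc c).card := by
    rw [Finset.sum_eq_sum_sdiff_singleton_add
      (Finset.mem_univ (0 : ZMod d × ZMod d)) (fun c => (sc c).card)]
    have hterm : ∀ c ∈ Finset.univ \ {(0 : ZMod d × ZMod d)}, d ≤ (sc c).card :=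
      fun c _ => hkey c (hPall c)
    have : (Finset.univ \ {(0 : ZMod d × ZMod d)}).card * d
        ≤ ∑ c ∈ Finset.univ \ {(0 : ZMod d × ZMod d)}, (sc c).card := by
      calc (Finset.univ \ {(0 : ZMod d × ZMod d)}).card * d
          = ∑ _c ∈ Finset.univ \ {(0 : ZMod d × ZMod d)}, d := by rw [Finset.sum_const, smul_eq_mul]
        _ ≤ _ := Finset.sum_le_sum hterm
    have h0card : (sc 0).card = N := by rw [hsc0]
    omega
  -- final arithmetic contradiction
  have hcarduniv : (Finset.univ \ {(0 : ZMod d × ZMod d)}).card + 1 = d * d := by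
    rw [Finset.card_sdiff_of_subset (by simp), Finset.card_singleton, Finset.card_univ,
      Fintype.card_prod, ZMod.card]
    have : 1 ≤ d * d := Nat.one_le_iff_ne_zero.mpr
      (Nat.mul_ne_zero (NeZero.ne d) (NeZero.ne d))
    omega
  have hd3 : 3 ≤ d := by
    have h2 := hp.two_le
    rcases Nat.lt_or_ge d 3 with h | h
    · exfalso
      have hd2 : d = 2 := by omega
      rw [hd2] at hodd
      exact (by decide : ¬ Odd 2) hodd
    · exact h
  set u : ℕ := (Finset.univ \ {(0 : ZMod d × ZMod d)}).card with hu
  have hfin : N + u * d ≤ N * N := by rw [hsum] at hlow; exact hlow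
  nlinarith [hfin, hcarduniv, h1, h2, hd3, Nat.mul_le_mul hd3 hd3]
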